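/- arXiv:2206.07525 — 2 statements merged into one kernel-verified Lean document; each statement's English description precedes it below -/
import Mathlib

section
/- Let φ: G → H be a graph homomorphism with G simply connected and let A ⊆ E(G) be φ-stable. If some A-intersection invariant I satisfies I(C) = 1 for some odd cycle C of G, then the graph obtained from G by deleting all edges in A is bipartite. -/
namespace Discrete

variable {V : Type*} {W : Type*}

/-- `IsWalk G l` : the nonempty list `l` of vertices forms a walk in `G`. -/
def IsWalk (G : SimpleGraph V) : List V → Prop
  | [] => False
  | [_] => True
  | a :: b :: l => G.Adj a b ∧ IsWalk G (b :: l)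

/-- One elementary homotopy step: substitution, insertion, or deletion. -/
inductive Step (G : SimpleGraph V) : List V → List V → Prop
  | sub (p q : List V) (a b c b' : V) (h1 : G.Adj a b') (h2 : G.Adj b' c) :
      Step G (p ++ a :: b :: c :: q) (p ++ a :: b' :: c :: q)
  | ins (p q : List V) (a w : V) (h : G.Adj a w) :
      Step G (p ++ a :: q) (p ++ a :: w :: a :: q)
  | del (p q : List V) (a w : V) :
      Step G (p ++ a :: w :: a :: q) (p ++ a :: q)

/-- Two walks are homotopic if one may be transformed into the other via a
finite sequence of substitution, insertion and deletion steps. -/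
def Homotopic (G : SimpleGraph V) : List V → List V → Prop :=
  Relation.ReflTransGen (Step G)

/-- The multiset of edges of a walk, counted with multiplicity. -/
def walkEdges (l : List V) : Multiset (Sym2 V) :=
  ↑((l.zip l.tail).map Sym2.mk.uncurry)

/-- A closed walk: a walk whose endpoints coincide. -/
def IsClosedWalk (G : SimpleGraph V) (l : List V) : Prop :=
  IsWalk G l ∧ l.head? = l.getLast?

/-- A closed walk based at `v0`. -/
def IsClosedWalkAt (G : SimpleGraph V) (v0 : V) (l : List V) : Prop :=
  IsWalk G l ∧ l.head? = some v0 ∧ l.getLast? = some v0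

/-- A cycle, recorded as a closed walk `v0 v1 ... v_{k-1} v0` of length at
least 3 whose vertices `v0, ..., v_{k-1}` are distinct. -/
def IsCycleList (G : SimpleGraph V) (l : List V) : Prop :=
  IsClosedWalk G l ∧ l.dropLast.Nodup ∧ 4 ≤ l.length

/-- `G` is simply connected: any two walks with the same endpoints and lengths
of the same parity are homotopic. -/
def SimplyConnected (G : SimpleGraph V) : Prop :=
  G.Connected ∧ ∀ P P' : List V, IsWalk G P → IsWalk G P' →
    P.head? = P'.head? → P.getLast? = P'.getLast? →
    (P.length - 1) % 2 = (P'.length - 1) % 2 → Homotopic G P P'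

/-- Two edges of `H` lie in a common 4-cycle of `H`. -/
def InCommonC4 (H : SimpleGraph W) (e f : Sym2 W) : Prop :=
  ∃ a b c d : W, a ≠ b ∧ a ≠ c ∧ a ≠ d ∧ b ≠ c ∧ b ≠ d ∧ c ≠ d ∧
    H.Adj a b ∧ H.Adj b c ∧ H.Adj c d ∧ H.Adj d a ∧
    (e = s(a, b) ∨ e = s(b, c) ∨ e = s(c, d) ∨ e = s(d, a)) ∧
    (f = s(a, b) ∨ f = s(b, c) ∨ f = s(c, d) ∨ f = s(d, a))

/-- The equivalence relation on `E(H)` generated by lying in a common `C4`;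
`C4Equiv H e f` says `f` lies in the `C4`-closure of `e`. -/
def C4Equiv (H : SimpleGraph W) : Sym2 W → Sym2 W → Prop :=
  Relation.EqvGen (InCommonC4 H)

/-- Two edges share an endpoint. -/
def Touch (e f : Sym2 V) : Prop := ∃ v, v ∈ e ∧ v ∈ f

/-- `[e]_φ`: the edge set of the connected component containing `e` of the
subgraph of `G` induced by the edge set `φ⁻¹(C4-closure of φ(e))`. -/
def PhiClass {G : SimpleGraph V} {H : SimpleGraph W} (φ : G →g H) (e : Sym2 V) :
    Set (Sym2 V) :=
  {e' | Relation.ReflTransGen (fun a b =>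
      a ∈ G.edgeSet ∧ b ∈ G.edgeSet ∧
      C4Equiv H (Sym2.map φ a) (Sym2.map φ e) ∧
      C4Equiv H (Sym2.map φ b) (Sym2.map φ e) ∧ Touch a b) e e'}

/-- `A ⊆ E(G)` is `φ`-stable if it is a union of classes `[e]_φ`. -/
def PhiStable {G : SimpleGraph V} {H : SimpleGraph W} (φ : G →g H)
    (A : Set (Sym2 V)) : Prop :=
  A ⊆ G.edgeSet ∧ ∀ e ∈ A, PhiClass φ e ⊆ A

/-- `A_u`: the edges of `A` having an endpoint in `φ⁻¹(u)`. -/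
def Au {G : SimpleGraph V} {H : SimpleGraph W} (φ : G →g H)
    (A : Set (Sym2 V)) (u : W) : Set (Sym2 V) :=
  {e ∈ A | ∃ v ∈ e, φ v = u}

open Classical in
/-- The intersection invariant `|F ∩ A| mod 2` of a multiset of edges. -/
noncomputable def inv2 (A : Set (Sym2 V)) (F : Multiset (Sym2 V)) : ℕ :=
  (F.filter (· ∈ A)).card % 2

/-- Concatenation of closed walks. -/
def catWalk (l l' : List V) : List V := l ++ l'.tail

/-- `n`-fold concatenation power of a closed walk based at `v0`. -/
def powWalk (v0 : V) (l : List V) : ℕ → List V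
  | 0 => [v0]
  | n + 1 => catWalk l (powWalk v0 l n)

/-- The discrete fundamental group `π₁(G)` is cyclic: some closed walk `P`
based at a vertex `v0` has the property that every closed walk based at `v0`
is homotopic to a power of `P` or of its reverse. -/
def CyclicPi1 (G : SimpleGraph V) : Prop :=
  G.Connected ∧ ∃ (v0 : V) (P : List V), IsClosedWalkAt G v0 P ∧
    ∀ Q : List V, IsClosedWalkAt G v0 Q →
      ∃ n : ℕ, Homotopic G Q (powWalk v0 P n) ∨ Homotopic G Q (powWalk v0 P.reverse n)

/-- `H` contains no cycle of length `n`. -/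
def CFree (H : SimpleGraph V) (n : ℕ) : Prop :=
  ∀ (v : V) (c : H.Walk v v), c.IsCycle → c.length ≠ n


lemma walkEdges_nil : walkEdges ([] : List V) = 0 := rfl
lemma walkEdges_single (a : V) : walkEdges [a] = 0 := rfl
lemma walkEdges_cons_cons (x y : V) (l : List V) :
    walkEdges (x :: y :: l) = s(x, y) ::ₘ walkEdges (y :: l) := rfl

lemma walkEdges_append (p : List V) (a : V) (r : List V) :
    walkEdges (p ++ a :: r) = walkEdges (p ++ [a]) + walkEdges (a :: r) := by
  induction p with
  | nil => simp [walkEdges_single]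
  | cons x p ih =>
    cases p with
    | nil =>
      simp only [List.nil_append, List.cons_append, walkEdges_cons_cons, walkEdges_single]
      simp [Multiset.singleton_add]
    | cons y p' =>
      simp only [List.cons_append, walkEdges_cons_cons] at *
      rw [ih, Multiset.cons_add]

lemma isWalk_append_iff (G : SimpleGraph V) (p : List V) (a : V) (r : List V) :
    IsWalk G (p ++ a :: r) ↔ IsWalk G (p ++ [a]) ∧ IsWalk G (a :: r) := by
  induction p with
  | nil =>
    simp only [List.nil_append]
    have : IsWalk G [a] := trivial
    tauto
  | cons x p ih =>
    cases p with
    | nil =>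
      cases r with
      | nil => show (G.Adj x a ∧ _) ↔ (G.Adj x a ∧ _) ∧ _; tauto
      | cons z r' =>
        show (G.Adj x a ∧ _) ↔ (G.Adj x a ∧ _) ∧ _
        constructor
        · rintro ⟨h1, h2⟩; exact ⟨⟨h1, trivial⟩, h2⟩
        · rintro ⟨⟨h1, _⟩, h2⟩; exact ⟨h1, h2⟩
    | cons y p' =>
      simp only [List.cons_append] at *
      show (G.Adj x y ∧ _) ↔ (G.Adj x y ∧ _) ∧ _
      rw [ih]; tauto

open Classical in
def Good (G : SimpleGraph V) (A : Set (Sym2 V)) : Prop :=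
  ∀ a b c b', G.Adj a b → G.Adj b c → G.Adj a b' → G.Adj b' c →
    ((if s(a,b) ∈ A then 1 else 0) + (if s(b,c) ∈ A then 1 else 0)) % 2 =
    ((if s(a,b') ∈ A then 1 else 0) + (if s(b',c) ∈ A then 1 else 0)) % 2

open Classical in
noncomputable def ecount (A : Set (Sym2 V)) (F : Multiset (Sym2 V)) : ℕ :=
  (F.filter (· ∈ A)).card

lemma inv2_eq (A : Set (Sym2 V)) (F : Multiset (Sym2 V)) : inv2 A F = ecount A F % 2 := rfl

open Classical in
lemma ecount_add (A : Set (Sym2 V)) (F F' : Multiset (Sym2 V)) :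
    ecount A (F + F') = ecount A F + ecount A F' := by
  simp [ecount, Multiset.filter_add]

open Classical in
lemma ecount_cons (A : Set (Sym2 V)) (e : Sym2 V) (F : Multiset (Sym2 V)) :
    ecount A (e ::ₘ F) = (if e ∈ A then 1 else 0) + ecount A F := by
  simp only [ecount, Multiset.filter_cons]
  by_cases h : e ∈ A <;> simp [h] <;> omega

open Classical in
lemma step_preserves {G : SimpleGraph V} {A : Set (Sym2 V)}
    (hGood : Good G A) {P P' : List V} (hs : Step G P P') (hw : IsWalk G P) :
    IsWalk G P' ∧ ecount A (walkEdges P') % 2 = ecount A (walkEdges P) % 2 := by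
  cases hs with
  | sub p q a b c b' h1 h2 =>
    rw [isWalk_append_iff] at hw
    obtain ⟨hw1, hab, hbc, hw2⟩ := hw
    refine ⟨(isWalk_append_iff G p a _).2 ⟨hw1, h1, h2, hw2⟩, ?_⟩
    rw [walkEdges_append p a (b :: c :: q), walkEdges_append p a (b' :: c :: q),
      walkEdges_cons_cons a b (c :: q), walkEdges_cons_cons b c q,
      walkEdges_cons_cons a b' (c :: q), walkEdges_cons_cons b' c q]
    simp only [ecount_add, ecount_cons]
    have := hGood a b c b' hab hbc h1 h2
    omega
  | ins p q a w h =>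
    rw [isWalk_append_iff] at hw
    obtain ⟨hw1, hw2⟩ := hw
    refine ⟨(isWalk_append_iff G p a _).2 ⟨hw1, h, h.symm, hw2⟩, ?_⟩
    rw [walkEdges_append p a q, walkEdges_append p a (w :: a :: q),
      walkEdges_cons_cons a w (a :: q), walkEdges_cons_cons w a q]
    simp only [ecount_add, ecount_cons]
    rw [Sym2.eq_swap (a := w)]
    omega
  | del p q a w =>
    rw [isWalk_append_iff] at hw
    obtain ⟨hw1, haw, hwa, hw2⟩ := hw
    refine ⟨(isWalk_append_iff G p a _).2 ⟨hw1, hw2⟩, ?_⟩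
    rw [walkEdges_append p a q, walkEdges_append p a (w :: a :: q),
      walkEdges_cons_cons a w (a :: q), walkEdges_cons_cons w a q]
    simp only [ecount_add, ecount_cons]
    rw [Sym2.eq_swap (a := w)]
    omega

lemma homotopic_inv {G : SimpleGraph V} {A : Set (Sym2 V)}
    (hGood : Good G A) {P P' : List V} (h : Homotopic G P P') (hw : IsWalk G P) :
    IsWalk G P' ∧ ecount A (walkEdges P') % 2 = ecount A (walkEdges P) % 2 := by
  induction h with
  | refl => exact ⟨hw, rfl⟩
  | tail _ hstep ih =>
    obtain ⟨hw1, he1⟩ := ih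
    obtain ⟨hw2, he2⟩ := step_preserves hGood hstep hw1
    exact ⟨hw2, he2.trans he1⟩

lemma touch_symm {e f : Sym2 V} (h : Touch e f) : Touch f e := by
  obtain ⟨v, h1, h2⟩ := h; exact ⟨v, h2, h1⟩

lemma stable_mem_iff {G : SimpleGraph V} {H : SimpleGraph W} {φ : G →g H}
    {A : Set (Sym2 V)} (hA : PhiStable φ A) {e e' : Sym2 V}
    (he : e ∈ G.edgeSet) (he' : e' ∈ G.edgeSet) (ht : Touch e e')
    (hc : C4Equiv H (Sym2.map φ e) (Sym2.map φ e')) : e ∈ A ↔ e' ∈ A := by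
  constructor
  · intro h
    exact hA.2 e h (Relation.ReflTransGen.single
      ⟨he, he', Relation.EqvGen.refl _, Relation.EqvGen.symm _ _ hc, ht⟩)
  · intro h
    exact hA.2 e' h (Relation.ReflTransGen.single
      ⟨he', he, Relation.EqvGen.refl _, hc, touch_symm ht⟩)

lemma map_pair (φ : V → W) (x y : V) : Sym2.map φ s(x,y) = s(φ x, φ y) := by
  simp [Sym2.map_pair_eq]

open Classical in
lemma ite_iff {p q : Prop} (h : p ↔ q) : (if p then (1:ℕ) else 0) = if q then 1 else 0 := by
  simp [h]

section
variable {G : SimpleGraph V} {H : SimpleGraph W} {φ : G →g H} {A : Set (Sym2 V)}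

/-- The four iffs coming from the common-C4 analysis of a substitution square. -/
lemma square_iffs (hA : PhiStable φ A) {a b c b' : V}
    (hab : G.Adj a b) (hbc : G.Adj b c) (hab' : G.Adj a b') (hb'c : G.Adj b' c) :
    (φ b = φ b' ∧ (s(a,b) ∈ A ↔ s(a,b') ∈ A) ∧ (s(b,c) ∈ A ↔ s(b',c) ∈ A)) ∨
    (φ a = φ c ∧ φ b ≠ φ b' ∧ (s(a,b) ∈ A ↔ s(b,c) ∈ A) ∧ (s(a,b') ∈ A ↔ s(b',c) ∈ A)) ∨
    (φ a ≠ φ c ∧ φ b ≠ φ b' ∧ (s(a,b) ∈ A ↔ s(b,c) ∈ A) ∧ (s(a,b) ∈ A ↔ s(a,b') ∈ A)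
      ∧ (s(a,b') ∈ A ↔ s(b',c) ∈ A)) := by
  have m_ab := G.mem_edgeSet.2 hab
  have m_bc := G.mem_edgeSet.2 hbc
  have m_ab' := G.mem_edgeSet.2 hab'
  have m_b'c := G.mem_edgeSet.2 hb'c
  by_cases h24 : φ b = φ b'
  · left
    refine ⟨h24, ?_, ?_⟩
    · refine stable_mem_iff hA m_ab m_ab' ⟨a, ?_, ?_⟩ ?_
      · exact Sym2.mem_mk_left a b
      · exact Sym2.mem_mk_left a b'
      · rw [map_pair, map_pair, h24]; exact Relation.EqvGen.refl _
    · refine stable_mem_iff hA m_bc m_b'c ⟨c, ?_, ?_⟩ ?_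
      · exact Sym2.mem_mk_right b c
      · exact Sym2.mem_mk_right b' c
      · rw [map_pair, map_pair, h24]; exact Relation.EqvGen.refl _
  · by_cases h13 : φ a = φ c
    · right; left
      refine ⟨h13, h24, ?_, ?_⟩
      · refine stable_mem_iff hA m_ab m_bc ⟨b, Sym2.mem_mk_right a b, Sym2.mem_mk_left b c⟩ ?_
        rw [map_pair, map_pair, h13, Sym2.eq_swap (a := φ b)]; exact Relation.EqvGen.refl _
      · refine stable_mem_iff hA m_ab' m_b'c ⟨b', Sym2.mem_mk_right a b', Sym2.mem_mk_left b' c⟩ ?_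
        rw [map_pair, map_pair, h13, Sym2.eq_swap (a := φ b')]; exact Relation.EqvGen.refl _
    · right; right
      have a12 := φ.map_adj hab
      have a23 := φ.map_adj hbc
      have a14 := φ.map_adj hab'
      have a43 := φ.map_adj hb'c
      have hC4 : ∀ e f : Sym2 W,
          (e = s(φ a, φ b) ∨ e = s(φ b, φ c) ∨ e = s(φ c, φ b') ∨ e = s(φ b', φ a)) →
          (f = s(φ a, φ b) ∨ f = s(φ b, φ c) ∨ f = s(φ c, φ b') ∨ f = s(φ b', φ a)) →
          C4Equiv H e f := by
        intro e f he hf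
        exact Relation.EqvGen.rel _ _
          ⟨φ a, φ b, φ c, φ b', a12.ne, h13, a14.ne, a23.ne, h24, fun h => a43.ne h.symm,
            a12, a23, a43.symm, a14.symm, he, hf⟩
      refine ⟨h13, h24, ?_, ?_, ?_⟩
      · refine stable_mem_iff hA m_ab m_bc ⟨b, Sym2.mem_mk_right a b, Sym2.mem_mk_left b c⟩ ?_
        rw [map_pair, map_pair]
        exact hC4 _ _ (Or.inl rfl) (Or.inr (Or.inl rfl))
      · refine stable_mem_iff hA m_ab m_ab' ⟨a, Sym2.mem_mk_left a b, Sym2.mem_mk_left a b'⟩ ?_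
        rw [map_pair, map_pair, Sym2.eq_swap (a := φ a) (b := φ b')]
        exact hC4 _ _ (Or.inl rfl) (Or.inr (Or.inr (Or.inr rfl)))
      · refine stable_mem_iff hA m_ab' m_b'c ⟨b', Sym2.mem_mk_right a b', Sym2.mem_mk_left b' c⟩ ?_
        rw [map_pair, map_pair, Sym2.eq_swap (a := φ a) (b := φ b'),
          Sym2.eq_swap (a := φ b') (b := φ c)]
        exact hC4 _ _ (Or.inr (Or.inr (Or.inr rfl))) (Or.inr (Or.inr (Or.inl rfl)))

open Classical in
lemma good_of_stable (hA : PhiStable φ A) : Good G A := by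
  intro a b c b' hab hbc hab' hb'c
  rcases square_iffs hA hab hbc hab' hb'c with ⟨_, i1, i2⟩ | ⟨_, _, i1, i2⟩ | ⟨_, _, i1, i2, i3⟩
  · rw [ite_iff i1, ite_iff i2]
  · rw [ite_iff i1, ite_iff i2]
    by_cases h1 : s(b,c) ∈ A <;> by_cases h2 : s(b',c) ∈ A <;> simp [h1, h2]
  · by_cases hx : s(a,b) ∈ A
    · have x2 := i1.mp hx
      have x3 := i2.mp hx
      have x4 := i3.mp (i2.mp hx)
      simp [hx, x2, x3, x4]
    · have x2 : s(b,c) ∉ A := fun h => hx (i1.mpr h)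
      have x3 : s(a,b') ∉ A := fun h => hx (i2.mpr h)
      have x4 : s(b',c) ∉ A := fun h => x3 (i3.mpr h)
      simp [hx, x2, x3, x4]

open Classical in
lemma mem_Au_iff {u : W} {x y : V} :
    s(x,y) ∈ Au φ A u ↔ s(x,y) ∈ A ∧ (φ x = u ∨ φ y = u) := by
  simp [Au, Sym2.mem_iff]

open Classical in
lemma good_Au (hA : PhiStable φ A) (u : W) : Good G (Au φ A u) := by
  intro a b c b' hab hbc hab' hb'c
  have n12 := (φ.map_adj hab).ne
  have n23 := (φ.map_adj hbc).ne
  have n14 := (φ.map_adj hab').ne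
  have n43 := (φ.map_adj hb'c).ne
  rcases square_iffs hA hab hbc hab' hb'c with ⟨h24, i1, i2⟩ | ⟨h13, h24, i1, i2⟩
    | ⟨h13, h24, i1, i2, i3⟩
  · have j1 : s(a,b) ∈ Au φ A u ↔ s(a,b') ∈ Au φ A u := by
      rw [mem_Au_iff, mem_Au_iff, h24]; tauto
    have j2 : s(b,c) ∈ Au φ A u ↔ s(b',c) ∈ Au φ A u := by
      rw [mem_Au_iff, mem_Au_iff, h24]; tauto
    rw [ite_iff j1, ite_iff j2]
  · have j1 : s(a,b) ∈ Au φ A u ↔ s(b,c) ∈ Au φ A u := by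
      rw [mem_Au_iff, mem_Au_iff, h13]; tauto
    have j2 : s(a,b') ∈ Au φ A u ↔ s(b',c) ∈ Au φ A u := by
      rw [mem_Au_iff, mem_Au_iff, h13]; tauto
    rw [ite_iff j1, ite_iff j2]
    by_cases h1 : s(b,c) ∈ Au φ A u <;> by_cases h2 : s(b',c) ∈ Au φ A u <;> simp [h1, h2]
  · by_cases hx : s(a,b) ∈ A
    · have x2 : s(b,c) ∈ A := i1.mp hx
      have x3 : s(a,b') ∈ A := i2.mp hx
      have x4 : s(b',c) ∈ A := i3.mp x3
      rw [ite_iff (mem_Au_iff.trans (by simp [hx] : s(a,b) ∈ A ∧ (φ a = u ∨ φ b = u) ↔ (φ a = u ∨ φ b = u))),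
        ite_iff (mem_Au_iff.trans (by simp [x2] : s(b,c) ∈ A ∧ (φ b = u ∨ φ c = u) ↔ (φ b = u ∨ φ c = u))),
        ite_iff (mem_Au_iff.trans (by simp [x3] : s(a,b') ∈ A ∧ (φ a = u ∨ φ b' = u) ↔ (φ a = u ∨ φ b' = u))),
        ite_iff (mem_Au_iff.trans (by simp [x4] : s(b',c) ∈ A ∧ (φ b' = u ∨ φ c = u) ↔ (φ b' = u ∨ φ c = u)))]
      by_cases p1 : φ a = u <;> by_cases p2 : φ b = u <;> by_cases p3 : φ c = u <;>
        by_cases p4 : φ b' = u <;> simp_all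
    · have x2 : s(b,c) ∉ A := fun h => hx (i1.mpr h)
      have x3 : s(a,b') ∉ A := fun h => hx (i2.mpr h)
      have x4 : s(b',c) ∉ A := fun h => x3 (i3.mpr h)
      have j1 : s(a,b) ∉ Au φ A u := fun h => hx (mem_Au_iff.mp h).1
      have j2 : s(b,c) ∉ Au φ A u := fun h => x2 (mem_Au_iff.mp h).1
      have j3 : s(a,b') ∉ Au φ A u := fun h => x3 (mem_Au_iff.mp h).1
      have j4 : s(b',c) ∉ Au φ A u := fun h => x4 (mem_Au_iff.mp h).1
      simp [j1, j2, j3, j4]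
end

lemma isWalk_support {G : SimpleGraph V} : ∀ {x y : V} (w : G.Walk x y), IsWalk G w.support
  | _, _, SimpleGraph.Walk.nil => trivial
  | x, _, SimpleGraph.Walk.cons h p => by
    rw [SimpleGraph.Walk.support_cons, p.support_eq_cons]
    refine ⟨h, ?_⟩
    rw [← p.support_eq_cons]
    exact isWalk_support p

lemma support_head? {G : SimpleGraph V} {x y : V} (w : G.Walk x y) :
    w.support.head? = some x := by
  rw [w.support_eq_cons]; rfl

lemma support_getLast? {G : SimpleGraph V} : ∀ {x y : V} (w : G.Walk x y),
    w.support.getLast? = some y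
  | _, _, SimpleGraph.Walk.nil => rfl
  | x, _, SimpleGraph.Walk.cons h p => by
    rw [SimpleGraph.Walk.support_cons, p.support_eq_cons, List.getLast?_cons_cons,
      ← p.support_eq_cons]
    exact support_getLast? p

lemma eq_dropLast {l : List V} {x : V} (hl : l.getLast? = some x) :
    l = l.dropLast ++ [x] := by
  have hne : l ≠ [] := by rintro rfl; simp at hl
  have h2 : l.getLast hne = x := by
    rw [List.getLast?_eq_getLast hne, Option.some_inj] at hl; exact hl
  rw [← h2]
  exact (List.dropLast_append_getLast hne).symm

lemma head?_eq_cons {l : List V} {x : V} (h : l.head? = some x) : l = x :: l.tail := by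
  cases l with
  | nil => simp at h
  | cons a t => simp at h; subst h; rfl

lemma isWalk_concat {G : SimpleGraph V} {l : List V} {x y : V}
    (hw : IsWalk G l) (hl : l.getLast? = some x) (hxy : G.Adj x y) :
    IsWalk G (l ++ [y]) ∧ (l ++ [y]).head? = l.head? ∧ (l ++ [y]).getLast? = some y ∧
      walkEdges (l ++ [y]) = s(x,y) ::ₘ walkEdges l := by
  have hne : l ≠ [] := by rintro rfl; simp at hl
  have hrepr := eq_dropLast hl
  have hrepr2 : l ++ [y] = l.dropLast ++ x :: [y] := by
    conv_lhs => rw [hrepr]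
    simp
  refine ⟨?_, ?_, ?_, ?_⟩
  · rw [hrepr2, isWalk_append_iff]
    exact ⟨by rw [← hrepr]; exact hw, hxy, trivial⟩
  · cases l with
    | nil => exact absurd rfl hne
    | cons a t => rfl
  · simp
  · rw [hrepr2, walkEdges_append _ x [y], ← hrepr]
    have h1 : walkEdges [x, y] = {s(x,y)} := rfl
    rw [h1, add_comm, Multiset.singleton_add]

lemma cat_facts {G : SimpleGraph V} {Cw Q : List V} {v0 : V}
    (hCw : IsWalk G Cw) (hh : Cw.head? = some v0) (hl : Cw.getLast? = some v0)
    (hQ : IsWalk G Q) (hQh : Q.head? = some v0) :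
    IsWalk G (Cw ++ Q.tail) ∧ (Cw ++ Q.tail).head? = some v0 ∧
      (Cw ++ Q.tail).getLast? = Q.getLast? ∧
      walkEdges (Cw ++ Q.tail) = walkEdges Cw + walkEdges Q ∧
      (Cw ++ Q.tail).length = Cw.length + Q.length - 1 := by
  have hQr : Q = v0 :: Q.tail := head?_eq_cons hQh
  have hCr : Cw = Cw.dropLast ++ [v0] := eq_dropLast hl
  have hkey : Cw ++ Q.tail = Cw.dropLast ++ v0 :: Q.tail := by
    conv_lhs => rw [hCr, List.append_assoc]
    rfl
  refine ⟨?_, ?_, ?_, ?_, ?_⟩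
  · rw [hkey, isWalk_append_iff, ← hCr, ← hQr]
    exact ⟨hCw, hQ⟩
  · have hne : Cw ≠ [] := by rintro rfl; simp at hh
    cases Cw with
    | nil => exact absurd rfl hne
    | cons a t => exact hh
  · rw [List.getLast?_append]
    cases htl : Q.tail with
    | nil =>
      rw [htl] at hQr
      simp [hQr, hl]
    | cons z t =>
      obtain ⟨w, hw2⟩ : ∃ w, (z :: t).getLast? = some w := by
        cases h : (z :: t).getLast? with
        | none => simp at h
        | some w => exact ⟨w, rfl⟩
      rw [hw2]
      conv_rhs => rw [hQr, htl]
      rw [List.getLast?_cons_cons, hw2]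
      rfl
  · rw [hkey, walkEdges_append, ← hCr, ← hQr]
  · conv_rhs => rw [hQr]
    simp

/-- If some `A`-intersection invariant equals 1 on some odd cycle of a simply
connected graph `G`, then `G` minus the edges of `A` is bipartite. -/
theorem deleteEdges_bipartite_of_inv_one (G : SimpleGraph V) (H : SimpleGraph W)
    (φ : G →g H) (hG : SimplyConnected G)
    (A : Set (Sym2 V)) (hA : PhiStable φ A)
    (C : List V) (hC : IsCycleList G C) (hCodd : (C.length - 1) % 2 = 1)
    (hinv : inv2 A (walkEdges C) = 1 ∨ ∃ u : W, inv2 (Au φ A u) (walkEdges C) = 1) :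
    (G.deleteEdges A).Colorable 2 := by
  classical
  obtain ⟨hconn, hsc⟩ := hG
  obtain ⟨⟨hCwalk, hCclosed⟩, -, hClen⟩ := hC
  obtain ⟨A', hsub, hGood, hJC⟩ :
      ∃ A' : Set (Sym2 V), A' ⊆ A ∧ Good G A' ∧ inv2 A' (walkEdges C) = 1 := by
    rcases hinv with h | ⟨u, h⟩
    · exact ⟨A, le_refl _, good_of_stable hA, h⟩
    · exact ⟨Au φ A u, fun e he => he.1, good_Au hA u, h⟩
  rw [inv2_eq] at hJC
  clear hinv hA
  have hCne : C ≠ [] := by rintro rfl; simp at hClen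
  obtain ⟨v0, hCh⟩ : ∃ v0, C.head? = some v0 := by
    cases C with
    | nil => exact absurd rfl hCne
    | cons a t => exact ⟨a, rfl⟩
  have hCl : C.getLast? = some v0 := by rw [← hCclosed]; exact hCh
  have hreach : ∀ v, ∃ l : List V, IsWalk G l ∧ l.head? = some v0 ∧ l.getLast? = some v := by
    intro v
    obtain ⟨w⟩ := hconn.preconnected v0 v
    exact ⟨w.support, isWalk_support w, support_head? w, support_getLast? w⟩
  choose P hPw hPh hPl using hreach
  have hPne : ∀ v, 1 ≤ (P v).length := by
    intro v
    have h := hPh v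
    cases hp : P v with
    | nil => rw [hp] at h; simp at h
    | cons a t => simp [hp]
  have key : ∀ v (Q : List V), IsWalk G Q → Q.head? = some v0 → Q.getLast? = some v →
      (ecount A' (walkEdges Q) + Q.length) % 2
        = (ecount A' (walkEdges (P v)) + (P v).length) % 2 := by
    intro v Q hQ hQh hQl
    have hQne : 1 ≤ Q.length := by
      cases hq : Q with
      | nil => rw [hq] at hQh; simp at hQh
      | cons a t => simp [hq]
    have hPv := hPne v
    by_cases hpar : (Q.length - 1) % 2 = ((P v).length - 1) % 2
    · have hhom := hsc Q (P v) hQ (hPw v) (hQh.trans (hPh v).symm)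
        (hQl.trans (hPl v).symm) hpar
      have hi := (homotopic_inv hGood hhom hQ).2
      omega
    · obtain ⟨hR, hRh, hRl, hRE, hRlen⟩ := cat_facts hCwalk hCh hCl hQ hQh
      have hClen2 : 4 ≤ C.length := hClen
      have hRlast : (C ++ Q.tail).getLast? = some v := hRl.trans hQl
      have hpar' : ((C ++ Q.tail).length - 1) % 2 = ((P v).length - 1) % 2 := by
        omega
      have hhom := hsc _ (P v) hR (hPw v) (hRh.trans (hPh v).symm)
        (hRlast.trans (hPl v).symm) hpar'
      have hi := (homotopic_inv hGood hhom hR).2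
      rw [hRE, ecount_add] at hi
      omega
  refine ⟨SimpleGraph.Coloring.mk
    (fun v => ⟨(ecount A' (walkEdges (P v)) + (P v).length) % 2, by omega⟩) ?_⟩
  intro x y hxy heq
  rw [SimpleGraph.deleteEdges_adj] at hxy
  obtain ⟨hadj, hnA⟩ := hxy
  have hnA' : s(x,y) ∉ A' := fun h => hnA (hsub h)
  obtain ⟨hW, hh, hl2, hE⟩ := isWalk_concat (hPw x) (hPl x) hadj
  have h1 := key y (P x ++ [y]) hW (hh.trans (hPh x)) hl2
  rw [hE, ecount_cons, if_neg hnA'] at h1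
  have hlen : (P x ++ [y]).length = (P x).length + 1 := by simp
  rw [hlen] at h1
  have heq2 : (ecount A' (walkEdges (P x)) + (P x).length) % 2
      = (ecount A' (walkEdges (P y)) + (P y).length) % 2 := congrArg Fin.val heq
  omega

end Discrete
end

section
/- Fix r ≥ 1. Let H be a C_{2r+1}-free graph and v a vertex of H such that every vertex of H is within graph distance r of v. Then the chromatic number of H is at most 4r. -/
/-- `H` contains no cycle of length `n`. -/
def CFree {V : Type*} (H : SimpleGraph V) (n : ℕ) : Prop :=
  ∀ (v : V) (c : H.Walk v v), c.IsCycle → c.length ≠ n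

namespace CFreeAux

open SimpleGraph

variable {V : Type*}

/-- A choice of "parent" of `w`: a neighbor strictly closer to `v`. -/
noncomputable def par (H : SimpleGraph V) (v : V) (w : V) : V := by
  classical
  exact if h : ∃ u, H.Adj w u ∧ H.dist v u + 1 = H.dist v w then h.choose else v

lemma par_spec (H : SimpleGraph V) (v : V) (hv : ∀ w, H.Reachable v w) {w : V}
    (hw : 1 ≤ H.dist v w) :
    H.Adj w (par H v w) ∧ H.dist v (par H v w) + 1 = H.dist v w := by
  classical
  have hne : w ≠ v := by
    rintro rfl
    simp [SimpleGraph.dist_self] at hw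
  have hex : ∃ u, H.Adj w u ∧ H.dist v u + 1 = H.dist v w := by
    obtain ⟨p, hp⟩ := (hv w).exists_walk_length_eq_dist
    obtain ⟨x, hadj, q, hq⟩ := SimpleGraph.Walk.exists_eq_cons_of_ne hne p.reverse
    have hqlen : q.length + 1 = H.dist v w := by
      have := congrArg SimpleGraph.Walk.length hq
      simpa [hp] using this.symm
    refine ⟨x, hadj, ?_⟩
    have h1 : H.dist v x ≤ q.length := by
      simpa using SimpleGraph.dist_le q.reverse
    have h2 : H.dist v w ≤ H.dist v x + 1 := by
      obtain ⟨p2, hp2⟩ := (hv x).exists_walk_length_eq_dist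
      have := SimpleGraph.dist_le (p2.concat hadj.symm)
      simpa [hp2] using this
    omega
  simp only [par]
  rw [dif_pos hex]
  exact hex.choose_spec

/-- the ancestor of `x` at distance `j` from `v` along the parent chain. -/
noncomputable def chain (H : SimpleGraph V) (v : V) (x : V) (j : ℕ) : V :=
  (par H v)^[H.dist v x - j] x

variable (H : SimpleGraph V) (v : V)

lemma dist_zero_eq (hv : ∀ w, H.Reachable v w) {w : V} (hw : H.dist v w = 0) : w = v :=
  (((hv w).dist_eq_zero_iff).mp hw).symm

lemma iter_dist (hv : ∀ w, H.Reachable v w) (x : V) :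
    ∀ t, t ≤ H.dist v x → H.dist v ((par H v)^[t] x) = H.dist v x - t := by
  intro t
  induction t with
  | zero => simp
  | succ n ih =>
    intro hn
    rw [Function.iterate_succ_apply']
    have hd : H.dist v ((par H v)^[n] x) = H.dist v x - n := ih (by omega)
    have := (par_spec H v hv (w := (par H v)^[n] x) (by omega)).2
    omega

lemma chain_dist (hv : ∀ w, H.Reachable v w) {x : V} {j : ℕ} (h : j ≤ H.dist v x) :
    H.dist v (chain H v x j) = j := by
  rw [chain, iter_dist H v hv x _ (by omega)]
  omega

lemma chain_eq_self {x : V} : chain H v x (H.dist v x) = x := by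
  simp [chain]

lemma chain_zero (hv : ∀ w, H.Reachable v w) (x : V) : chain H v x 0 = v := by
  apply dist_zero_eq H v hv
  rw [chain_dist H v hv (Nat.zero_le _)]

lemma chain_succ {x : V} {j : ℕ} (h : j + 1 ≤ H.dist v x) :
    chain H v x j = par H v (chain H v x (j + 1)) := by
  rw [chain, chain, show H.dist v x - j = (H.dist v x - (j+1)) + 1 by omega,
    Function.iterate_succ_apply']

lemma chain_adj (hv : ∀ w, H.Reachable v w) {x : V} {j : ℕ} (h : j + 1 ≤ H.dist v x) :
    H.Adj (chain H v x (j + 1)) (chain H v x j) := by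
  rw [chain_succ H v h]
  exact (par_spec H v hv (w := chain H v x (j+1))
    (by rw [chain_dist H v hv h]; omega)).1

lemma chain_chain (hv : ∀ w, H.Reachable v w) {x : V} {j j' : ℕ} (h1 : j ≤ j')
    (h2 : j' ≤ H.dist v x) :
    chain H v (chain H v x j') j = chain H v x j := by
  have hd : H.dist v (chain H v x j') = j' := chain_dist H v hv h2
  conv_lhs => rw [chain, hd]
  rw [chain, chain, ← Function.iterate_add_apply,
    show (j' - j) + (H.dist v x - j') = H.dist v x - j by omega]

lemma share_le (hv : ∀ w, H.Reachable v w) {x y : V} {j j' : ℕ} (h1 : j ≤ j')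
    (hx : j' ≤ H.dist v x) (hy : j' ≤ H.dist v y) (h : chain H v x j' = chain H v y j') :
    chain H v x j = chain H v y j := by
  rw [← chain_chain H v hv h1 hx, h, chain_chain H v hv h1 hy]


/-! ### Lexicographic order on ancestor chains -/

/-- Lexicographic (by ancestor chain) strict order, using a fixed well-ordering of `V`. -/
def lexLt (x y : V) : Prop :=
  ∃ j, chain H v x j ≠ chain H v y j ∧ (∀ ℓ < j, chain H v x ℓ = chain H v y ℓ) ∧
    WellOrderingRel (chain H v x j) (chain H v y j)

lemma lexLt_ne {x y : V} (h : lexLt H v x y) : x ≠ y := by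
  rintro rfl
  obtain ⟨j, hj, -, -⟩ := h
  exact hj rfl

lemma lexLt_asymm {x y : V} (h : lexLt H v x y) (h' : lexLt H v y x) : False := by
  obtain ⟨p, hp1, hp2, hp3⟩ := h
  obtain ⟨q, hq1, hq2, hq3⟩ := h'
  rcases lt_trichotomy p q with hlt | rfl | hlt
  · exact hp1 (hq2 p hlt).symm
  · exact asymm hp3 hq3
  · exact hq1 (hp2 q hlt).symm

lemma lexLt_trans {x y z : V} (h : lexLt H v x y) (h' : lexLt H v y z) :
    lexLt H v x z := by
  obtain ⟨p, hp1, hp2, hp3⟩ := h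
  obtain ⟨q, hq1, hq2, hq3⟩ := h'
  rcases lt_trichotomy p q with hlt | rfl | hlt
  · refine ⟨p, ?_, ?_, ?_⟩
    · rw [← hq2 p hlt]; exact hp1
    · intro ℓ hℓ; rw [hp2 ℓ hℓ, hq2 ℓ (hℓ.trans hlt)]
    · rw [← hq2 p hlt]; exact hp3
  · refine ⟨p, ?_, ?_, ?_⟩
    · intro hc
      rw [hc] at hp3
      exact asymm hp3 hq3
    · intro ℓ hℓ; rw [hp2 ℓ hℓ, hq2 ℓ hℓ]
    · exact Trans.trans hp3 hq3
  · refine ⟨q, ?_, ?_, ?_⟩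
    · rw [hp2 q hlt]; exact hq1
    · intro ℓ hℓ; rw [hp2 ℓ (hℓ.trans hlt), hq2 ℓ hℓ]
    · rw [hp2 q hlt]; exact hq3

lemma lexLt_trichot {x y : V} (hxy : x ≠ y) (hi : H.dist v x = H.dist v y) :
    lexLt H v x y ∨ lexLt H v y x := by
  classical
  have hS : ∃ j, chain H v x j ≠ chain H v y j := by
    refine ⟨H.dist v x, ?_⟩
    rw [chain_eq_self, hi, chain_eq_self]
    exact hxy
  set j₀ := Nat.find hS with hj₀
  have hdiff : chain H v x j₀ ≠ chain H v y j₀ := Nat.find_spec hS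
  have hbelow : ∀ ℓ < j₀, chain H v x ℓ = chain H v y ℓ := by
    intro ℓ hℓ
    by_contra hc
    exact Nat.find_min hS hℓ hc
  rcases trichotomous_of WellOrderingRel (chain H v x j₀) (chain H v y j₀) with hR | hEq | hR
  · exact Or.inl ⟨j₀, hdiff, hbelow, hR⟩
  · exact absurd hEq hdiff
  · exact Or.inr ⟨j₀, hdiff.symm, fun ℓ hℓ => (hbelow ℓ hℓ).symm, hR⟩

lemma lexLt_interval (hv : ∀ w, H.Reachable v w) {x z y : V} {i j : ℕ}
    (hx : H.dist v x = i) (hz : H.dist v z = i) (hy : H.dist v y = i)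
    (hxz : lexLt H v x z) (hzy : lexLt H v z y) (hj : j ≤ i)
    (hshare : chain H v x j = chain H v y j) :
    chain H v x j = chain H v z j := by
  obtain ⟨p, hp1, hp2, hp3⟩ := hxz
  obtain ⟨q, hq1, hq2, hq3⟩ := hzy
  rcases lt_or_ge j p with hlt | hle
  · exact hp2 j hlt
  exfalso
  have hxyl : ∀ ℓ, ℓ ≤ j → chain H v x ℓ = chain H v y ℓ := by
    intro ℓ hℓ
    exact share_le H v hv hℓ (by omega) (by omega) hshare
  rcases lt_trichotomy p q with hlt | rfl | hlt
  · exact hp1 ((hxyl p hle).trans (hq2 p hlt).symm)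
  · have := hxyl p hle
    rw [this] at hp3
    exact asymm hp3 hq3
  · have h1 : chain H v x q = chain H v z q := hp2 q hlt
    have h2 : chain H v x q = chain H v y q := hxyl q (le_trans (le_of_lt hlt) hle)
    exact hq1 (h1.symm.trans h2)

/-! ### Generic walk from a vertex function -/

/-- Build a walk from a function enumerating successively adjacent vertices. -/
def walkOfFn (F : ℕ → V) : (n : ℕ) → (∀ t, t < n → H.Adj (F t) (F (t+1))) → H.Walk (F 0) (F n)
  | 0, _ => SimpleGraph.Walk.nil
  | (n+1), h =>
    (walkOfFn F n (fun t ht => h t (ht.trans n.lt_succ_self))).concat (h n n.lt_succ_self)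

lemma walkOfFn_length (F : ℕ → V) (n : ℕ) (h : ∀ t, t < n → H.Adj (F t) (F (t+1))) :
    (walkOfFn H F n h).length = n := by
  induction n with
  | zero => rfl
  | succ n ih => simp [walkOfFn, ih]

lemma walkOfFn_support (F : ℕ → V) (n : ℕ) (h : ∀ t, t < n → H.Adj (F t) (F (t+1))) :
    (walkOfFn H F n h).support = (List.range (n+1)).map F := by
  induction n with
  | zero => rfl
  | succ n ih =>
    simp only [walkOfFn, SimpleGraph.Walk.support_concat, ih, List.range_succ (n := n+1)]
    simp

lemma walkOfFn_edges (F : ℕ → V) (n : ℕ) (h : ∀ t, t < n → H.Adj (F t) (F (t+1))) :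
    (walkOfFn H F n h).edges = (List.range n).map (fun t => s(F t, F (t+1))) := by
  induction n with
  | zero => rfl
  | succ n ih =>
    simp only [walkOfFn, SimpleGraph.Walk.edges_concat, ih, List.range_succ (n := n)]
    simp



/-! ### The key cycle construction -/

lemma share_succ_of_path {r : ℕ} (hH : CFree H (2 * r + 1)) (hv : ∀ w, H.Reachable v w)
    {i j s : ℕ} (hir : i ≤ r) (hji : j + 1 ≤ i)
    (hs : s = 2 * (r - i) + 2 * j + 1)
    (f : ℕ → V)
    (hlayer : ∀ t, t ≤ s → H.dist v (f t) = i)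
    (hadj : ∀ t, t < s → H.Adj (f t) (f (t+1)))
    (hinj : ∀ a b, a ≤ s → b ≤ s → f a = f b → a = b)
    (hsharej : chain H v (f 0) j = chain H v (f s) j) :
    chain H v (f 0) (j+1) = chain H v (f s) (j+1) := by
  by_contra hne
  have hi1 : 1 ≤ i := by omega
  set q := i - j with hq
  have hq1 : 1 ≤ q := by omega
  set N := s + 2 * q with hNdef
  have hN : N = 2 * r + 1 := by omega
  have hd0 : H.dist v (f 0) = i := hlayer 0 (by omega)
  have hds : H.dist v (f s) = i := hlayer s le_rfl
  set F : ℕ → V := fun t =>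
    if t ≤ s then f t
    else if t ≤ s + q then chain H v (f s) (i - (t - s))
    else chain H v (f 0) (j + (t - s - q)) with hF
  have hFA : ∀ t, t ≤ s → F t = f t := by
    intro t ht; simp only [hF]; rw [if_pos ht]
  have hFB : ∀ t, s < t → t ≤ s + q → F t = chain H v (f s) (i - (t - s)) := by
    intro t h1 h2; simp only [hF]; rw [if_neg (by omega), if_pos h2]
  have hFC : ∀ t, s + q < t → F t = chain H v (f 0) (j + (t - s - q)) := by
    intro t h1; simp only [hF]; rw [if_neg (by omega), if_neg (by omega)]
  have hF0 : F 0 = f 0 := hFA 0 (by omega)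
  have hFN : F N = f 0 := by
    rw [hFC N (by omega), show j + (N - s - q) = i by omega, ← hd0, chain_eq_self]
  -- distances of the cycle's vertices
  have hdB : ∀ t, s < t → t ≤ s + q → H.dist v (F t) = i - (t - s) := by
    intro t h1 h2
    rw [hFB t h1 h2]
    exact chain_dist H v hv (by omega)
  have hdC : ∀ t, s + q < t → t ≤ N → H.dist v (F t) = j + (t - s - q) := by
    intro t h1 h2
    rw [hFC t h1]
    exact chain_dist H v hv (by omega)
  -- adjacency along the cycle
  have hFadj : ∀ t, t < N → H.Adj (F t) (F (t+1)) := by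
    intro t ht
    rcases lt_trichotomy t s with h1 | heq | h1
    · rw [hFA t (by omega), hFA (t+1) (by omega)]
      exact hadj t h1
    · rw [heq]
      rw [hFA s le_rfl, hFB (s+1) (by omega) (by omega),
        show i - (s+1-s) = i - 1 by omega]
      have h := chain_adj H v hv (x := f s) (j := i - 1) (by omega)
      rw [show i - 1 + 1 = i by omega] at h
      rw [← hds] at h
      rw [chain_eq_self] at h
      rw [hds] at h
      exact h
    · rcases lt_trichotomy t (s + q) with h2 | rfl | h2
      · rw [hFB t h1 (by omega), hFB (t+1) (by omega) (by omega)]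
        have h := chain_adj H v hv (x := f s) (j := i - (t + 1 - s)) (by omega)
        rw [show i - (t+1-s) + 1 = i - (t - s) by omega] at h
        exact h
      · rw [hFB (s+q) h1 le_rfl, hFC (s+q+1) (by omega),
          show i - (s + q - s) = j by omega, show j + (s+q+1-s-q) = j + 1 by omega,
          ← hsharej]
        exact (chain_adj H v hv (x := f 0) (j := j) (by omega)).symm
      · rw [hFC t h2, hFC (t+1) (by omega),
          show j + (t+1-s-q) = (j + (t - s - q)) + 1 by omega]
        exact (chain_adj H v hv (x := f 0) (j := j + (t - s - q)) (by omega)).symm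
  -- injectivity of the cycle's vertices
  have hkey : ∀ a b, a ≤ N → b ≤ N → a ≤ b → F a = F b → a = b ∨ (a = 0 ∧ b = N) := by
    intro a b haN hbN hab hFab
    rcases le_or_gt a s with ha | ha
    · rcases le_or_gt b s with hb | hb
      · left
        exact hinj a b ha hb (by rw [← hFA a ha, ← hFA b hb, hFab])
      · rcases le_or_gt b (s + q) with hb2 | hb2
        · exfalso
          have e1 : H.dist v (F a) = i := by rw [hFA a ha]; exact hlayer a ha
          have e2 := hdB b hb hb2
          rw [hFab] at e1
          omega
        · have e1 : H.dist v (F a) = i := by rw [hFA a ha]; exact hlayer a ha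
          have e2 := hdC b hb2 hbN
          rw [hFab] at e1
          have hbn : b = N := by omega
          subst hbn
          right
          refine ⟨?_, rfl⟩
          rw [hFN] at hFab
          exact hinj a 0 ha (by omega) (by rw [← hFA a ha, hFab])
    · rcases le_or_gt b (s + q) with hb | hb
      · left
        have e1 := hdB a ha (by omega)
        have e2 := hdB b (by omega) hb
        rw [hFab] at e1
        omega
      · rcases le_or_gt a (s + q) with ha2 | ha2
        · -- a in chain-up part, b in chain-down part
          have e1 := hdB a ha ha2
          have e2 := hdC b hb hbN
          rw [hFab] at e1
          exfalso
          rcases le_or_gt (j + 1) (j + (b - s - q)) with hℓ1 | hℓ1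
          · have heq : i - (a - s) = j + (b - s - q) := by omega
            have hch' : F a = F b := hFab
            rw [hFB a ha ha2, hFC b hb, heq] at hch'
            have := share_le H v hv (x := f s) (y := f 0) hℓ1
              (by rw [hds]; omega) (by rw [hd0]; omega) hch'
            exact hne this.symm
          · omega
        · left
          have e1 := hdC a ha2 haN
          have e2 := hdC b hb hbN
          rw [hFab] at e1
          omega
  have hFinj : ∀ a b, a ≤ N → b ≤ N → F a = F b →
      a = b ∨ (a = 0 ∧ b = N) ∨ (a = N ∧ b = 0) := by
    intro a b haN hbN hFab
    rcases le_or_gt a b with hab | hab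
    · rcases hkey a b haN hbN hab hFab with h | h
      · exact Or.inl h
      · exact Or.inr (Or.inl h)
    · rcases hkey b a hbN haN (le_of_lt hab) hFab.symm with h | h
      · exact Or.inl h.symm
      · exact Or.inr (Or.inr ⟨h.2, h.1⟩)
  -- the closed walk
  have hr1 : 1 ≤ r := by omega
  set W : H.Walk (f 0) (f 0) := (walkOfFn H F N hFadj).copy hF0 hFN with hW
  have hWlen : W.length = N := by
    rw [hW, SimpleGraph.Walk.length_copy, walkOfFn_length]
  have hWsup : W.support = (List.range (N+1)).map F := by
    rw [hW, SimpleGraph.Walk.support_copy, walkOfFn_support]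
  have hWedg : W.edges = (List.range N).map (fun t => s(F t, F (t+1))) := by
    rw [hW, SimpleGraph.Walk.edges_copy, walkOfFn_edges]
  have hcyc : W.IsCycle := by
    refine ⟨⟨⟨?_⟩, ?_⟩, ?_⟩
    · -- edges nodup
      rw [hWedg]
      refine List.Nodup.map_on ?_ List.nodup_range
      intro t ht t' ht' hst
      rw [List.mem_range] at ht ht'
      rw [Sym2.eq_iff] at hst
      rcases hst with ⟨h1, h2⟩ | ⟨h1, h2⟩
      · rcases hFinj t t' (by omega) (by omega) h1 with h | h | h <;> omega
      · rcases hFinj t (t'+1) (by omega) (by omega) h1 with h | h | h <;>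
          rcases hFinj (t+1) t' (by omega) (by omega) h2 with h' | h' | h' <;> omega
    · -- not nil
      intro hnil
      rw [hnil] at hWlen
      simp at hWlen
      omega
    · -- support tail nodup
      rw [hWsup, List.range_succ_eq_map]
      simp only [List.map_cons, List.tail_cons, List.map_map]
      refine List.Nodup.map_on ?_ List.nodup_range
      intro t ht t' ht' hst
      rw [List.mem_range] at ht ht'
      have : F (t+1) = F (t'+1) := hst
      rcases hFinj (t+1) (t'+1) (by omega) (by omega) this with h | h | h <;> omega
  exact hH (f 0) W hcyc (by omega)


/-! ### Lex-increasing sequences in a layer -/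

/-- A lex-increasing sequence of successively adjacent vertices inside layer `i`. -/
def IsSeq (i m : ℕ) (f : ℕ → V) : Prop :=
  (∀ t, t ≤ m → H.dist v (f t) = i) ∧ (∀ t, t < m → H.Adj (f t) (f (t+1))) ∧
    (∀ a b, a < b → b ≤ m → lexLt H v (f a) (f b))

lemma isSeq_share {r : ℕ} (hH : CFree H (2*r+1)) (hv : ∀ w, H.Reachable v w)
    {i m : ℕ} (hir : i ≤ r) {f : ℕ → V} (hf : IsSeq H v i m f) :
    ∀ j, j ≤ i → 2*(r-i) + 2*j ≤ m + 1 → ∀ a b, a ≤ m → b ≤ m →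
      chain H v (f a) j = chain H v (f b) j := by
  obtain ⟨hlay, hadj, hlex⟩ := hf
  intro j
  induction j with
  | zero => intro _ _ a b _ _; rw [chain_zero H v hv, chain_zero H v hv]
  | succ j ih =>
    intro hji hm a b ha hb
    set s := 2*(r-i) + 2*j + 1 with hs
    have hsm : s ≤ m := by omega
    have step1 : ∀ a, a + s ≤ m → chain H v (f a) (j+1) = chain H v (f (a+s)) (j+1) := by
      intro a haS
      have hinj : ∀ c d : ℕ, c ≤ s → d ≤ s → f (a+c) = f (a+d) → c = d := by
        intro c d hc hd hfe
        by_contra hne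
        rcases Nat.lt_or_ge c d with h | h
        · exact lexLt_ne H v (hlex (a+c) (a+d) (by omega) (by omega)) hfe
        · have h' : d < c := by omega
          exact lexLt_ne H v (hlex (a+d) (a+c) (by omega) (by omega)) hfe.symm
      have := share_succ_of_path H v hH hv hir hji hs (fun t => f (a+t))
        (fun t ht => hlay (a+t) (by omega))
        (fun t ht => hadj (a+t) (by omega))
        hinj
        (ih (by omega) (by omega) a (a+s) (by omega) (by omega))
      simpa using this
    have const : ∀ b, b ≤ m → chain H v (f b) (j+1) = chain H v (f 0) (j+1) := by
      intro b
      induction b with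
      | zero => intro _; rfl
      | succ b ihb =>
        intro hbm
        have hb' : b ≤ m := by omega
        set w := min b (m - s) with hw
        have hw1 : w ≤ b := min_le_left _ _
        have hw2 : w + s ≤ m := by omega
        have hw3 : b + 1 ≤ w + s := by omega
        have hws : chain H v (f w) (j+1) = chain H v (f (w+s)) (j+1) := step1 w hw2
        have hmid : ∀ c, w ≤ c → c ≤ w + s → chain H v (f w) (j+1) = chain H v (f c) (j+1) := by
          intro c h1 h2
          rcases eq_or_lt_of_le h1 with rfl | h1'
          · rfl
          rcases eq_or_lt_of_le h2 with rfl | h2'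
          · exact hws
          exact lexLt_interval H v hv (hlay w (by omega)) (hlay c (by omega))
            (hlay (w+s) (by omega)) (hlex w c h1' (by omega)) (hlex c (w+s) h2' (by omega))
            (by omega) hws
        calc chain H v (f (b+1)) (j+1) = chain H v (f w) (j+1) :=
              (hmid (b+1) (by omega) hw3).symm
          _ = chain H v (f b) (j+1) := hmid b hw1 (by omega)
          _ = chain H v (f 0) (j+1) := ihb hb'
    exact (const a ha).trans (const b hb).symm

lemma isSeq_le {r : ℕ} (hH : CFree H (2*r+1)) (hv : ∀ w, H.Reachable v w)
    (hvd : ∀ w, H.dist v w ≤ r) (hr : 1 ≤ r) {i m : ℕ} {f : ℕ → V}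
    (hf : IsSeq H v i m f) : m ≤ 2*r - 2 := by
  by_contra hcon
  push_neg at hcon
  have hm1 : 2*r - 1 ≤ m := by omega
  obtain ⟨hlay, hadj, hlex⟩ := hf
  have hlexm := hlex 0 m (by omega) le_rfl
  rcases Nat.eq_zero_or_pos i with hi | hi
  · have h0 : f 0 = v := dist_zero_eq H v hv (by rw [hlay 0 (by omega), hi])
    have hm : f m = v := dist_zero_eq H v hv (by rw [hlay m le_rfl, hi])
    exact lexLt_ne H v hlexm (h0.trans hm.symm)
  · have hir : i ≤ r := by rw [← hlay 0 (by omega)]; exact hvd (f 0)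
    have hsh := isSeq_share H v hH hv hir ⟨hlay, hadj, hlex⟩ i le_rfl (by omega)
      0 m (by omega) le_rfl
    have e0 : chain H v (f 0) i = f 0 := by
      rw [show i = H.dist v (f 0) from (hlay 0 (by omega)).symm]
      exact chain_eq_self H v
    have em : chain H v (f m) i = f m := by
      rw [show i = H.dist v (f m) from (hlay m le_rfl).symm]
      exact chain_eq_self H v
    rw [e0, em] at hsh
    exact lexLt_ne H v hlexm hsh

/-! ### The layer coloring -/

/-- Color of `x`: length of the longest lex-increasing adjacent sequence inside
the layer of `x` ending at `x`. -/
noncomputable def lexCol (x : V) : ℕ :=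
  sSup {m | ∃ f : ℕ → V, IsSeq H v (H.dist v x) m f ∧ f m = x}

lemma lexCol_set_nonempty (x : V) :
    {m | ∃ f : ℕ → V, IsSeq H v (H.dist v x) m f ∧ f m = x}.Nonempty := by
  refine ⟨0, fun _ => x, ⟨?_, ?_, ?_⟩, rfl⟩
  · intro t ht; rfl
  · intro t ht; omega
  · intro a b hab hb; omega

lemma lexCol_set_bdd {r : ℕ} (hH : CFree H (2*r+1)) (hv : ∀ w, H.Reachable v w)
    (hvd : ∀ w, H.dist v w ≤ r) (hr : 1 ≤ r) (x : V) :
    BddAbove {m | ∃ f : ℕ → V, IsSeq H v (H.dist v x) m f ∧ f m = x} := by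
  refine ⟨2*r - 2, ?_⟩
  rintro m ⟨f, hf, -⟩
  exact isSeq_le H v hH hv hvd hr hf

lemma lexCol_le {r : ℕ} (hH : CFree H (2*r+1)) (hv : ∀ w, H.Reachable v w)
    (hvd : ∀ w, H.dist v w ≤ r) (hr : 1 ≤ r) (x : V) :
    lexCol H v x ≤ 2*r - 2 := by
  apply csSup_le (lexCol_set_nonempty H v x)
  rintro m ⟨f, hf, -⟩
  exact isSeq_le H v hH hv hvd hr hf

lemma lexCol_lt {r : ℕ} (hH : CFree H (2*r+1)) (hv : ∀ w, H.Reachable v w)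
    (hvd : ∀ w, H.dist v w ≤ r) (hr : 1 ≤ r) {x y : V}
    (hxy : H.Adj x y) (hdist : H.dist v x = H.dist v y) (hlt : lexLt H v x y) :
    lexCol H v x < lexCol H v y := by
  have hmem := Nat.sSup_mem (lexCol_set_nonempty H v x) (lexCol_set_bdd H v hH hv hvd hr x)
  obtain ⟨f, ⟨hlay, hadj, hlex⟩, hfx⟩ := hmem
  set c := lexCol H v x with hc
  have hfx' : f c = x := hfx
  set g : ℕ → V := fun t => if t ≤ c then f t else y with hg
  have hgy : ∀ t, c < t → g t = y := by intro t ht; simp only [hg]; rw [if_neg (by omega)]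
  have hgf : ∀ t, t ≤ c → g t = f t := by intro t ht; simp only [hg]; rw [if_pos ht]
  have hmemy : (c + 1) ∈ {m | ∃ f : ℕ → V, IsSeq H v (H.dist v y) m f ∧ f m = y} := by
    refine ⟨g, ⟨?_, ?_, ?_⟩, hgy (c+1) (by omega)⟩
    · intro t ht
      rcases le_or_gt t c with h | h
      · rw [hgf t h, ← hdist]; exact hlay t h
      · rw [hgy t h]
    · intro t ht
      rcases lt_or_ge t c with h | h
      · rw [hgf t (by omega), hgf (t+1) (by omega)]; exact hadj t h
      · have htc : t = c := by omega
        rw [htc, hgf c le_rfl, hgy (c+1) (by omega), hfx']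
        exact hxy
    · intro a b hab hb
      rcases le_or_gt b c with h | h
      · rw [hgf a (by omega), hgf b h]; exact hlex a b hab h
      · have hbc : b = c + 1 := by omega
        rw [hbc, hgy (c+1) (by omega), hgf a (by omega)]
        rcases eq_or_lt_of_le (show a ≤ c by omega) with rfl | h'
        · rw [hfx']; exact hlt
        · exact lexLt_trans H v (by rw [← hfx']; exact hlex a c h' le_rfl) hlt
  have : c + 1 ≤ lexCol H v y :=
    le_csSup (lexCol_set_bdd H v hH hv hvd hr y) hmemy
  omega

end CFreeAux

/-- A `C_{2r+1}`-free graph of radius at most `r` from a center `v` has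
chromatic number at most `4r`. -/
theorem colorable_of_radius_le {V : Type*} (r : ℕ) (hr : 1 ≤ r)
    (H : SimpleGraph V) (hH : CFree H (2 * r + 1))
    (v : V) (hv : ∀ w : V, H.Reachable v w ∧ H.dist v w ≤ r) :
    H.Colorable (4 * r) := by
  classical
  have hvr : ∀ w, H.Reachable v w := fun w => (hv w).1
  have hvd : ∀ w, H.dist v w ≤ r := fun w => (hv w).2
  rw [SimpleGraph.colorable_iff_exists_bdd_nat_coloring]
  refine ⟨SimpleGraph.Coloring.mk
    (fun w => (if H.dist v w % 2 = 0 then 0 else 2*r - 1) + CFreeAux.lexCol H v w) ?_, ?_⟩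
  · intro u w huw
    have hcu := CFreeAux.lexCol_le H v hH hvr hvd hr u
    have hcw := CFreeAux.lexCol_le H v hH hvr hvd hr w
    have h1 : H.dist v w ≤ H.dist v u + 1 := by
      obtain ⟨p, hp⟩ := (hvr u).exists_walk_length_eq_dist
      have := SimpleGraph.dist_le (p.concat huw)
      simpa [hp] using this
    have h2 : H.dist v u ≤ H.dist v w + 1 := by
      obtain ⟨p, hp⟩ := (hvr w).exists_walk_length_eq_dist
      have := SimpleGraph.dist_le (p.concat huw.symm)
      simpa [hp] using this
    have hlexne : H.dist v u = H.dist v w → CFreeAux.lexCol H v u ≠ CFreeAux.lexCol H v w := by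
      intro heq
      rcases CFreeAux.lexLt_trichot H v huw.ne heq with h | h
      · exact Nat.ne_of_lt (CFreeAux.lexCol_lt H v hH hvr hvd hr huw heq h)
      · exact (Nat.ne_of_lt (CFreeAux.lexCol_lt H v hH hvr hvd hr huw.symm heq.symm h)).symm
    show ((if H.dist v u % 2 = 0 then 0 else 2*r - 1) + CFreeAux.lexCol H v u) ≠
      ((if H.dist v w % 2 = 0 then 0 else 2*r - 1) + CFreeAux.lexCol H v w)
    split_ifs with hpu hpw hpw
    · have heq : H.dist v u = H.dist v w := by omega
      have := hlexne heq
      omega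
    · omega
    · omega
    · have heq : H.dist v u = H.dist v w := by omega
      have := hlexne heq
      omega
  · intro w
    have hcw := CFreeAux.lexCol_le H v hH hvr hvd hr w
    show ((if H.dist v w % 2 = 0 then 0 else 2*r - 1) + CFreeAux.lexCol H v w) < 4*r
    split_ifs <;> omega
end
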